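/- For x ∈ ℚ₂: |x|₂ ≤ 1 if and only if there exists y ∈ ℚ₂ with 1 + 2·x³ = y³. -/

import Mathlib

open Polynomial

lemma norm_three_q2 : ‖(3 : ℚ_[2])‖ = 1 := by
  have hc : ((3:ℤ) : ℚ_[2]) = 3 := by norm_num
  have h1 : ‖((3:ℤ) : ℚ_[2])‖ ≤ 1 := Padic.norm_int_le_one 3
  have h2 : ¬ ‖((3:ℤ) : ℚ_[2])‖ < 1 := by
    rw [Padic.norm_intCast_lt_one_iff]; norm_num
  rw [hc] at h1 h2
  exact le_antisymm h1 (not_lt.mp h2)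

/-- For `x ∈ ℚ₂`: `|x|₂ ≤ 1` iff `1 + 2 x³` is a cube. -/
theorem padic_two_int_iff_one_add_two_cube_is_cube (x : ℚ_[2]) :
    ‖x‖ ≤ 1 ↔ ∃ y : ℚ_[2], 1 + 2 * x ^ 3 = y ^ 3 := by
  constructor
  · intro hx
    set X : ℤ_[2] := ⟨x, hx⟩ with hX
    set F : Polynomial ℤ_[2] := Polynomial.X ^ 3 - Polynomial.C (1 + 2 * X ^ 3) with hF
    have heval : F.eval 1 = -(2 * X ^ 3) := by simp [hF]
    have hderiv1 : F.derivative.eval 1 = 3 := by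
      rw [hF, Polynomial.derivative_sub, Polynomial.derivative_C,
        Polynomial.derivative_X_pow]
      simp
    have hnorm2 : ‖(2 : ℤ_[2])‖ = 1 / 2 := by
      have := @PadicInt.norm_p 2 _
      norm_num at this ⊢
      exact this
    have hnorm3 : ‖(3 : ℤ_[2])‖ = 1 := by
      rw [PadicInt.norm_def]
      exact norm_three_q2
    have key : ‖F.eval 1‖ < ‖F.derivative.eval 1‖ ^ 2 := by
      rw [heval, hderiv1, hnorm3, norm_neg]
      calc ‖2 * X ^ 3‖ ≤ ‖(2 : ℤ_[2])‖ * ‖X ^ 3‖ := norm_mul_le _ _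
        _ ≤ 1 / 2 * 1 := by
            rw [hnorm2]
            gcongr
            exact PadicInt.norm_le_one _
        _ < 1 ^ 2 := by norm_num
    obtain ⟨z, hz, -⟩ := hensels_lemma key
    refine ⟨(z : ℚ_[2]), ?_⟩
    have hz' : z ^ 3 = 1 + 2 * X ^ 3 := by
      simp [hF] at hz
      linear_combination hz
    have h := congrArg (fun t : ℤ_[2] => (t : ℚ_[2])) hz'
    push_cast at h
    have h2 : ((2 : ℤ_[2]) : ℚ_[2]) = 2 := by
      rw [show (2:ℤ_[2]) = 1 + 1 by norm_num, PadicInt.coe_add, PadicInt.coe_one]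
      norm_num
    rw [h2] at h
    exact h.symm
  · rintro ⟨y, hy⟩
    by_contra hx
    push_neg at hx
    have hx0 : x ≠ 0 := by
      intro h; rw [h, norm_zero] at hx; linarith
    have h2x : (2 : ℚ_[2]) * x ^ 3 ≠ 0 := by simp [hx0]
    -- ‖x‖ ≥ 2
    have hnx : 2 ≤ ‖x‖ := by
      rw [Padic.norm_eq_zpow_neg_valuation hx0] at hx ⊢
      have hv : x.valuation ≤ -1 := by
        by_contra hv
        push_neg at hv
        have h0 : (0:ℤ) ≤ x.valuation := by omega
        have : ((2:ℝ)) ^ (-x.valuation) ≤ 1 :=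
          zpow_le_one_of_nonpos₀ (by norm_num) (by omega)
        push_cast at hx
        linarith
      calc (2:ℝ) = (2:ℝ) ^ (1:ℤ) := by norm_num
        _ ≤ (2:ℝ) ^ (-x.valuation) := by
            apply zpow_le_zpow_right₀ (by norm_num); omega
        _ = ((2:ℕ):ℝ) ^ (-x.valuation) := by norm_num
    have hcube : (8:ℝ) ≤ ‖x‖ ^ 3 := by
      have := pow_le_pow_left₀ (by norm_num : (0:ℝ) ≤ 2) hnx 3
      norm_num at this
      linarith
    have hnorm2x : ‖(2:ℚ_[2]) * x ^ 3‖ = 2⁻¹ * ‖x‖ ^ 3 := by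
      rw [norm_mul, norm_pow]
      congr 1
      simpa using @Padic.norm_p 2 _
    have hne : ‖(1:ℚ_[2])‖ ≠ ‖(2:ℚ_[2]) * x ^ 3‖ := by
      rw [norm_one, hnorm2x]
      intro h
      linarith
    have hmax : ‖(1:ℚ_[2]) + 2 * x ^ 3‖ = ‖(2:ℚ_[2]) * x ^ 3‖ := by
      rw [Padic.add_eq_max_of_ne hne, max_eq_right]
      rw [norm_one, hnorm2x]; linarith
    have hsum : (1:ℚ_[2]) + 2 * x ^ 3 ≠ 0 := by
      intro h
      rw [h, norm_zero, hnorm2x] at hmax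
      linarith
    have hy0 : y ≠ 0 := by
      intro h
      rw [h] at hy
      simp at hy
      exact hsum hy
    -- valuation of 2x³
    have h3 : ((2:ℚ_[2]) * x ^ 3).valuation = 1 + 3 * x.valuation := by
      rw [Padic.valuation_mul (by norm_num) (pow_ne_zero 3 hx0)]
      congr 1
      · simp [@Padic.valuation_p 2 _]
      · rw [show (x^3 : ℚ_[2]) = x * (x * x) by ring,
          Padic.valuation_mul hx0 (mul_ne_zero hx0 hx0),
          Padic.valuation_mul hx0 hx0]
        ring
    have h1 : ((2:ℕ):ℝ) ^ (-((1:ℚ_[2]) + 2 * x ^ 3).valuation)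
        = ((2:ℕ):ℝ) ^ (-(1 + 3 * x.valuation)) := by
      rw [← Padic.norm_eq_zpow_neg_valuation hsum, hmax, Padic.norm_eq_zpow_neg_valuation h2x, h3]
    have hval : ((1:ℚ_[2]) + 2 * x ^ 3).valuation = 1 + 3 * x.valuation := by
      have := zpow_right_injective₀ (by norm_num : (0:ℝ) < ((2:ℕ):ℝ))
        (by norm_num : ((2:ℕ):ℝ) ≠ 1) h1
      omega
    have hvy : (y ^ 3 : ℚ_[2]).valuation = 3 * y.valuation := by
      rw [show (y^3 : ℚ_[2]) = y * (y * y) by ring,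
        Padic.valuation_mul hy0 (mul_ne_zero hy0 hy0),
        Padic.valuation_mul hy0 hy0]
      ring
    rw [hy, hvy] at hval
    omega
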